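/- Let N ≥ 8 be an integer and set M = ⌈√(N/8)⌉. For each integer m ≥ 0, let S_m be the resampling matrix on ℝ^{Π(m)} for sample size N, and let v^{(m)}, f^{(m)} ∈ ℝ^{Π(m)} be vectors. Let α, β : ℕ → ℝ satisfy |v^{(m)}_π| ≤ α_m for all π ∈ Π(m) and Σ_{π ∈ Π(m)} |f^{(m)}_π| ≤ β_m, with α_m, β_m ≥ 0, and suppose γ_m := Σ_{j=m}^∞ α_j β_j is finite for every m, with γ_M > 0 and γ_0 ≥ γ_M. Set k = ⌊ (log₂ γ_0 − log₂ γ_M)/2 ⌋. Then the total bias of the k-times iterated bootstrap satisfies Σ_{m=0}^∞ | (v^{(m)})ᵀ (Id − S_m)^{k+1} f^{(m)} | ≤ 4·√( γ_0 · γ_M ). -/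

import Mathlib

open Finset
open scoped Classical

/-- The resampling matrix `S ∈ ℝ^{Π(m)×Π(m)}` for sample size `N`:
`S_{π,σ} = N^{(#π)} / N^{#σ}` if `σ ≤ π`, and `0` otherwise. -/
noncomputable def resampS (N m : ℕ) :
    Matrix (Finpartition (Finset.univ : Finset (Fin m)))
      (Finpartition (Finset.univ : Finset (Fin m))) ℝ :=
  fun π σ =>
    if σ ≤ π then (N.descFactorial π.parts.card : ℝ) / (N : ℝ) ^ σ.parts.card else 0

namespace ResampAux

variable {α : Type*} [Fintype α] [DecidableEq α]

/-- kernel finpartition of a map -/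
noncomputable def K {N : ℕ} (g : α → Fin N) : Finpartition (univ : Finset α) :=
  Finpartition.ofSetoid (Setoid.ker g)

lemma mem_part_K {N : ℕ} (g : α → Fin N) (a b : α) : b ∈ (K g).part a ↔ g a = g b := by
  rw [K, Finpartition.mem_part_ofSetoid_iff_rel, Setoid.ker_def]

lemma part_K_eq_iff {N : ℕ} (g : α → Fin N) (a b : α) :
    (K g).part a = (K g).part b ↔ g a = g b := by
  rw [← mem_part_K g a b, (K g).mem_part_iff_part_eq_part (mem_univ b) (mem_univ a)]
  exact eq_comm

lemma ext_part {P Q : Finpartition (univ : Finset α)}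
    (h : ∀ a, P.part a = Q.part a) : P = Q := by
  ext t
  constructor
  · intro ht
    obtain ⟨x, hx⟩ := P.nonempty_of_mem_parts ht
    rw [← P.part_eq_of_mem ht hx, h]
    exact Q.part_mem.2 (mem_univ x)
  · intro ht
    obtain ⟨x, hx⟩ := Q.nonempty_of_mem_parts ht
    rw [← Q.part_eq_of_mem ht hx, ← h]
    exact P.part_mem.2 (mem_univ x)

lemma K_eq_iff {N : ℕ} (g : α → Fin N) (π : Finpartition (univ : Finset α)) :
    K g = π ↔ ∀ a b, (g a = g b ↔ π.part a = π.part b) := by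
  constructor
  · rintro rfl a b
    exact (part_K_eq_iff g a b).symm
  · intro h
    apply ext_part
    intro a
    ext b
    rw [mem_part_K g a b, h a b, π.mem_part_iff_part_eq_part (mem_univ b) (mem_univ a), eq_comm]

/-- representative of a part -/
noncomputable def rep (P : Finpartition (univ : Finset α)) (b : P.parts) : α :=
  (P.nonempty_of_mem_parts b.2).choose

lemma rep_mem (P : Finpartition (univ : Finset α)) (b : P.parts) : rep P b ∈ (b : Finset α) :=
  (P.nonempty_of_mem_parts b.2).choose_spec

lemma part_rep (P : Finpartition (univ : Finset α)) (b : P.parts) :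
    P.part (rep P b) = b :=
  P.part_eq_of_mem b.2 (rep_mem P b)

noncomputable def fiberEquiv {N : ℕ} (π : Finpartition (univ : Finset α)) :
    {g : α → Fin N // K g = π} ≃ (π.parts ↪ Fin N) where
  toFun g := ⟨fun b => g.1 (rep π b), by
    intro b b' hbb
    have h := ((K_eq_iff g.1 π).1 g.2 (rep π b) (rep π b')).1 hbb
    rw [part_rep, part_rep] at h
    exact Subtype.ext h⟩
  invFun e := ⟨fun a => e ⟨π.part a, π.part_mem.2 (mem_univ a)⟩, by
    rw [K_eq_iff]
    intro a b
    constructor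
    · intro h
      have := e.injective h
      exact congrArg Subtype.val this
    · intro h
      exact congrArg e (Subtype.ext h)⟩
  left_inv g := by
    apply Subtype.ext
    funext a
    show g.1 (rep π ⟨π.part a, _⟩) = g.1 a
    apply ((K_eq_iff g.1 π).1 g.2 _ _).2
    exact π.part_eq_of_mem (π.part_mem.2 (mem_univ a))
      (rep_mem π ⟨π.part a, π.part_mem.2 (mem_univ a)⟩) |>.trans
      (rfl)
  right_inv e := by
    apply Function.Embedding.ext
    intro b
    show e ⟨π.part (rep π b), _⟩ = e b
    exact congrArg e (Subtype.ext (part_rep π b))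



lemma K_const {N : ℕ} {g : α → Fin N} {σ : Finpartition (univ : Finset α)}
    (hg : σ ≤ K g) {b : Finset α} (hb : b ∈ σ.parts) {x y : α} (hx : x ∈ b) (hy : y ∈ b) :
    g x = g y := by
  obtain ⟨c, hc, hbc⟩ := hg hb
  have hcx : (K g).part x = c := (K g).part_eq_of_mem hc (hbc hx)
  have hyy : y ∈ (K g).part x := hcx ▸ hbc hy
  exact (mem_part_K g x y).1 hyy

noncomputable def topEquiv {N : ℕ} (σ : Finpartition (univ : Finset α)) :
    {g : α → Fin N // σ ≤ K g} ≃ (σ.parts → Fin N) where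
  toFun g b := g.1 (rep σ b)
  invFun h := ⟨fun a => h ⟨σ.part a, σ.part_mem.2 (mem_univ a)⟩, by
    intro b hb
    refine ⟨(K _).part (rep σ ⟨b, hb⟩), (K _).part_mem.2 (mem_univ _), ?_⟩
    intro y hy
    rw [mem_part_K]
    have h1 : σ.part (rep σ ⟨b, hb⟩) = b := part_rep σ ⟨b, hb⟩
    have h2 : σ.part y = b := σ.part_eq_of_mem hb hy
    show h ⟨σ.part (rep σ ⟨b, hb⟩), _⟩ = h ⟨σ.part y, _⟩
    congr 1
    exact Subtype.ext (h1.trans h2.symm)⟩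
  left_inv g := by
    apply Subtype.ext
    funext a
    show g.1 (rep σ ⟨σ.part a, _⟩) = g.1 a
    exact K_const g.2 (σ.part_mem.2 (mem_univ a))
      (rep_mem σ ⟨σ.part a, σ.part_mem.2 (mem_univ a)⟩) (σ.mem_part (mem_univ a))
  right_inv h := by
    funext b
    show h ⟨σ.part (rep σ b), _⟩ = h b
    exact congrArg h (Subtype.ext (part_rep σ b))

lemma sum_descFactorial (N : ℕ) (σ : Finpartition (univ : Finset α)) :
    ∑ π : Finpartition (univ : Finset α),
      (if σ ≤ π then N.descFactorial π.parts.card else 0) = N ^ σ.parts.card := by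
  classical
  have h1 : Fintype.card {g : α → Fin N // σ ≤ K g} = N ^ σ.parts.card := by
    rw [Fintype.card_congr (topEquiv σ)]
    simp [Fintype.card_coe]
  have h2 : ∀ π : Finpartition (univ : Finset α),
      Fintype.card {g : α → Fin N // K g = π} = N.descFactorial π.parts.card := by
    intro π
    rw [Fintype.card_congr (fiberEquiv π), Fintype.card_embedding_eq]
    simp [Fintype.card_coe]
  rw [← h1, Fintype.card_subtype]
  rw [Finset.card_eq_sum_card_fiberwise (f := fun g => K g) (t := univ) (fun x _ => mem_univ _)]
  refine Finset.sum_congr rfl fun π _ => ?_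
  by_cases hσπ : σ ≤ π
  · have hset : filter (fun a => K a = π) (filter (fun x => σ ≤ K x) (univ : Finset (α → Fin N)))
        = filter (fun g : α → Fin N => K g = π) univ := by
      ext g
      simp only [mem_filter, mem_univ, true_and]
      exact ⟨fun h => h.2, fun h => ⟨h ▸ hσπ, h⟩⟩
    rw [if_pos hσπ, ← h2 π, Fintype.card_subtype, hset]
  · rw [if_neg hσπ]
    symm
    rw [Finset.card_eq_zero]
    ext g
    simp only [mem_filter, mem_univ, true_and, notMem_empty, iff_false, not_and]
    intro hle h
    exact hσπ (h ▸ hle)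



lemma colsum (N m : ℕ) (hN : 0 < N) (σ : Finpartition (univ : Finset (Fin m))) :
    ∑ π : Finpartition (univ : Finset (Fin m)), resampS N m π σ = 1 := by
  have h := sum_descFactorial (α := Fin m) N σ
  have hNe : ((N : ℝ) ^ σ.parts.card) ≠ 0 := pow_ne_zero _ (Nat.cast_ne_zero.2 hN.ne')
  have h' : (∑ π : Finpartition (univ : Finset (Fin m)),
      (if σ ≤ π then (N.descFactorial π.parts.card : ℝ) else 0)) = (N:ℝ) ^ σ.parts.card := by
    have hc := congrArg (Nat.cast : ℕ → ℝ) h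
    push_cast at hc
    simpa using hc
  calc ∑ π : Finpartition (univ : Finset (Fin m)), resampS N m π σ
      = (∑ π : Finpartition (univ : Finset (Fin m)),
          (if σ ≤ π then (N.descFactorial π.parts.card : ℝ) else 0)) / (N:ℝ)^σ.parts.card := by
        rw [Finset.sum_div]
        refine Finset.sum_congr rfl fun π _ => ?_
        unfold resampS
        split <;> simp
    _ = 1 := by rw [h', div_self hNe]

lemma resampS_nonneg (N m : ℕ) (π σ : Finpartition (univ : Finset (Fin m))) :
    0 ≤ resampS N m π σ := by
  unfold resampS
  split
  · positivity
  · exact le_refl 0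

lemma col_abs (N m : ℕ) (hN : 0 < N) (σ : Finpartition (univ : Finset (Fin m))) :
    ∑ π : Finpartition (univ : Finset (Fin m)), |(1 - resampS N m) π σ|
      = 2 * (1 - (N.descFactorial σ.parts.card : ℝ) / (N:ℝ) ^ σ.parts.card) := by
  set d : ℝ := (N.descFactorial σ.parts.card : ℝ) / (N:ℝ) ^ σ.parts.card with hd
  have hd1 : d ≤ 1 := by
    rw [hd, div_le_one (by positivity)]
    exact_mod_cast Nat.descFactorial_le_pow N σ.parts.card
  have habs : ∀ π : Finpartition (univ : Finset (Fin m)),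
      |(1 - resampS N m) π σ| = (if π = σ then (1 - 2 * d) else 0) + resampS N m π σ := by
    intro π
    rw [Matrix.sub_apply, Matrix.one_apply]
    by_cases hπ : π = σ
    · subst hπ
      rw [if_pos rfl, if_pos rfl]
      have hres : resampS N m π π = d := by
        rw [hd]; unfold resampS; rw [if_pos le_rfl]
      rw [hres, abs_of_nonneg (by linarith)]
      ring
    · rw [if_neg hπ, if_neg hπ, zero_sub, abs_neg,
        abs_of_nonneg (resampS_nonneg N m π σ), zero_add]
  rw [Finset.sum_congr rfl fun π _ => habs π, Finset.sum_add_distrib, colsum N m hN σ,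
    Finset.sum_ite_eq' univ σ (fun _ => 1 - 2 * d)]
  simp only [mem_univ, if_true]
  ring

lemma mulVec_l1 (N m : ℕ) {c : ℝ}
    (hc : ∀ σ : Finpartition (univ : Finset (Fin m)),
      ∑ π : Finpartition (univ : Finset (Fin m)), |(1 - resampS N m) π σ| ≤ c)
    (x : Finpartition (univ : Finset (Fin m)) → ℝ) :
    ∑ π : Finpartition (univ : Finset (Fin m)), |(1 - resampS N m).mulVec x π|
      ≤ c * ∑ π : Finpartition (univ : Finset (Fin m)), |x π| := by
  calc ∑ π : Finpartition (univ : Finset (Fin m)), |(1 - resampS N m).mulVec x π|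
      ≤ ∑ π : Finpartition (univ : Finset (Fin m)),
          ∑ σ : Finpartition (univ : Finset (Fin m)), |(1 - resampS N m) π σ| * |x σ| := by
        refine Finset.sum_le_sum fun π _ => ?_
        simp only [Matrix.mulVec, dotProduct]
        refine (Finset.abs_sum_le_sum_abs _ _).trans ?_
        exact le_of_eq (Finset.sum_congr rfl fun σ _ => abs_mul _ _)
    _ = ∑ σ : Finpartition (univ : Finset (Fin m)),
          (∑ π : Finpartition (univ : Finset (Fin m)), |(1 - resampS N m) π σ|) * |x σ| := by
        rw [Finset.sum_comm]
        exact Finset.sum_congr rfl fun σ _ => (Finset.sum_mul _ _ _).symm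
    _ ≤ ∑ σ : Finpartition (univ : Finset (Fin m)), c * |x σ| :=
        Finset.sum_le_sum fun σ _ => mul_le_mul_of_nonneg_right (hc σ) (abs_nonneg _)
    _ = c * ∑ π : Finpartition (univ : Finset (Fin m)), |x π| := by rw [Finset.mul_sum]

lemma pow_mulVec_l1 (N m : ℕ) {c : ℝ} (hc0 : 0 ≤ c)
    (hc : ∀ σ : Finpartition (univ : Finset (Fin m)),
      ∑ π : Finpartition (univ : Finset (Fin m)), |(1 - resampS N m) π σ| ≤ c) (j : ℕ)
    (x : Finpartition (univ : Finset (Fin m)) → ℝ) :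
    ∑ π : Finpartition (univ : Finset (Fin m)), |((1 - resampS N m) ^ j).mulVec x π|
      ≤ c ^ j * ∑ π : Finpartition (univ : Finset (Fin m)), |x π| := by
  induction j with
  | zero => simp [Matrix.one_mulVec]
  | succ j ih =>
    rw [pow_succ', ← Matrix.mulVec_mulVec]
    calc ∑ π : Finpartition (univ : Finset (Fin m)),
          |(1 - resampS N m).mulVec (((1 - resampS N m) ^ j).mulVec x) π|
        ≤ c * ∑ π : Finpartition (univ : Finset (Fin m)),
            |((1 - resampS N m) ^ j).mulVec x π| := mulVec_l1 N m hc _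
      _ ≤ c * (c ^ j * ∑ π : Finpartition (univ : Finset (Fin m)), |x π|) :=
          mul_le_mul_of_nonneg_left ih hc0
      _ = c ^ (j + 1) * ∑ π : Finpartition (univ : Finset (Fin m)), |x π| := by ring

lemma descFactorial_lb (N : ℕ) : ∀ s : ℕ, s ≤ N →
    (N:ℝ)^s * (2*N - s*(s-1)) ≤ 2*N*(N.descFactorial s) := by
  intro s
  induction s with
  | zero => intro _; simp
  | succ s ih =>
    intro hs
    have hsN : s ≤ N := Nat.le_of_succ_le hs
    have hmul' := ih hsN
    have hsR : (s:ℝ) ≤ N := by exact_mod_cast hsN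
    have h1 : (0:ℝ) ≤ (N:ℝ) - s := by linarith
    have hcast : (N.descFactorial (s+1) : ℝ) = ((N:ℝ) - s) * N.descFactorial s := by
      rw [Nat.descFactorial_succ]
      push_cast [Nat.cast_sub hsN]
      ring
    have hpow : (0:ℝ) ≤ (N:ℝ)^s := by positivity
    have hmul := mul_le_mul_of_nonneg_left hmul' h1
    have key : (N:ℝ) * (2*N - (s+1)*s) ≤ ((N:ℝ) - s) * (2*N - s*(s-1)) := by
      rcases Nat.eq_zero_or_pos s with h | h
      · subst h; push_cast; ring_nf; nlinarith [hsR]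
      · have h1s : (1:ℝ) ≤ s := by exact_mod_cast h
        nlinarith [mul_le_mul_of_nonneg_left h1s (mul_self_nonneg (s:ℝ))]
    have key2 := mul_le_mul_of_nonneg_left key hpow
    rw [hcast, pow_succ]
    push_cast
    nlinarith [key2, hmul]

lemma col_le_two (N m : ℕ) (hN : 0 < N) (σ : Finpartition (univ : Finset (Fin m))) :
    ∑ π : Finpartition (univ : Finset (Fin m)), |(1 - resampS N m) π σ| ≤ 2 := by
  rw [col_abs N m hN σ]
  have h : (0:ℝ) ≤ (N.descFactorial σ.parts.card : ℝ) / (N:ℝ) ^ σ.parts.card := by positivity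
  linarith

lemma col_le_half (N m : ℕ) (hN : 0 < N) (hm : (m:ℝ) * (m:ℝ) < (N:ℝ)/8)
    (σ : Finpartition (univ : Finset (Fin m))) :
    ∑ π : Finpartition (univ : Finset (Fin m)), |(1 - resampS N m) π σ| ≤ 1/2 := by
  set s := σ.parts.card with hsdef
  have hsm : s ≤ m := by
    have h := σ.card_parts_le_card
    simpa [Finset.card_univ] using h
  have hNR : (0:ℝ) < N := by exact_mod_cast hN
  have hN1R : (1:ℝ) ≤ N := by exact_mod_cast hN
  have hsmR : (s:ℝ) ≤ m := by exact_mod_cast hsm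
  have hmR : (0:ℝ) ≤ m := Nat.cast_nonneg m
  have hsR : (0:ℝ) ≤ s := Nat.cast_nonneg s
  have hss : (s:ℝ) * (s:ℝ) ≤ (m:ℝ) * (m:ℝ) := mul_le_mul hsmR hsmR hsR hmR
  have h1 : (s:ℝ) * ((s:ℝ) - 1) ≤ (m:ℝ) * (m:ℝ) := by nlinarith
  have hsN : s ≤ N := by
    have hr : (s:ℝ) ≤ (N:ℝ) := by nlinarith [sq_nonneg ((s:ℝ) - 1)]
    exact_mod_cast hr
  have hlb := descFactorial_lb N s hsN
  have hpow : (0:ℝ) < (N:ℝ)^s := by positivity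
  rw [col_abs N m hN σ]
  set D : ℝ := (N.descFactorial s : ℝ) with hD
  have h2 : (N:ℝ)^s * (2*N - N/8) ≤ 2*N*D := le_trans (by nlinarith [hpow.le]) hlb
  have h3 : 2*(N:ℝ)*((3/4)*(N:ℝ)^s) ≤ 2*(N:ℝ)*D := by nlinarith [(mul_pos hNR hpow).le]
  have h4 : (3/4)*(N:ℝ)^s ≤ D := le_of_mul_le_mul_left h3 (by positivity)
  have h5 : (3/4:ℝ) ≤ D / (N:ℝ)^s := (le_div_iff₀ hpow).2 (by linarith)
  linarith

lemma term_bound (N m : ℕ) {c : ℝ} (hc0 : 0 ≤ c)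
    (hc : ∀ σ : Finpartition (univ : Finset (Fin m)),
      ∑ π : Finpartition (univ : Finset (Fin m)), |(1 - resampS N m) π σ| ≤ c)
    (j : ℕ) (v x : Finpartition (univ : Finset (Fin m)) → ℝ) {a b : ℝ}
    (ha0 : 0 ≤ a) (hv : ∀ π, |v π| ≤ a)
    (hx : ∑ π : Finpartition (univ : Finset (Fin m)), |x π| ≤ b) :
    |∑ π : Finpartition (univ : Finset (Fin m)),
        v π * ((1 - resampS N m) ^ j).mulVec x π| ≤ c ^ j * (a * b) := by
  have hcb := pow_mulVec_l1 N m hc0 hc j x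
  calc |∑ π : Finpartition (univ : Finset (Fin m)),
          v π * ((1 - resampS N m) ^ j).mulVec x π|
      ≤ ∑ π : Finpartition (univ : Finset (Fin m)),
          |v π * ((1 - resampS N m) ^ j).mulVec x π| := Finset.abs_sum_le_sum_abs _ _
    _ ≤ ∑ π : Finpartition (univ : Finset (Fin m)),
          a * |((1 - resampS N m) ^ j).mulVec x π| := by
        refine Finset.sum_le_sum fun π _ => ?_
        rw [abs_mul]
        exact mul_le_mul_of_nonneg_right (hv π) (abs_nonneg _)
    _ = a * ∑ π : Finpartition (univ : Finset (Fin m)),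
          |((1 - resampS N m) ^ j).mulVec x π| := by rw [Finset.mul_sum]
    _ ≤ a * (c ^ j * ∑ π : Finpartition (univ : Finset (Fin m)), |x π|) :=
        mul_le_mul_of_nonneg_left hcb ha0
    _ ≤ a * (c ^ j * b) := by
        refine mul_le_mul_of_nonneg_left ?_ ha0
        exact mul_le_mul_of_nonneg_left hx (pow_nonneg hc0 j)
    _ = c ^ j * (a * b) := by ring

end ResampAux

/-- Bias reduction beyond moment polynomials: with `M = ⌈√(N/8)⌉`,
`γ_m = Σ_{j ≥ m} α_j β_j` and `k = ⌊(log₂ γ_0 − log₂ γ_M)/2⌋`, the total bias of the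
`k`-times iterated bootstrap is at most `4·√(γ_0 γ_M)`. -/
theorem total_bias_bound (N : ℕ) (hN : 8 ≤ N)
    (v f : (m : ℕ) → Finpartition (Finset.univ : Finset (Fin m)) → ℝ)
    (α β : ℕ → ℝ)
    (hα0 : ∀ m, 0 ≤ α m) (hβ0 : ∀ m, 0 ≤ β m)
    (hv : ∀ (m : ℕ) (π : Finpartition (Finset.univ : Finset (Fin m))), |v m π| ≤ α m)
    (hf : ∀ m : ℕ, ∑ π : Finpartition (Finset.univ : Finset (Fin m)), |f m π| ≤ β m)
    (hsum : Summable fun j : ℕ => α j * β j)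
    (γ : ℕ → ℝ) (hγ : ∀ m : ℕ, γ m = ∑' j : ℕ, α (m + j) * β (m + j))
    (M : ℕ) (hM : M = ⌈Real.sqrt ((N : ℝ) / 8)⌉₊)
    (hγM : 0 < γ M) (hγ0 : γ M ≤ γ 0)
    (k : ℕ) (hk : k = ⌊(Real.logb 2 (γ 0) - Real.logb 2 (γ M)) / 2⌋₊) :
    ∑' m : ℕ,
        |∑ π : Finpartition (Finset.univ : Finset (Fin m)),
          v m π * ((1 - resampS N m) ^ (k + 1)).mulVec (f m) π|
      ≤ 4 * Real.sqrt (γ 0 * γ M) := by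
  have hN0 : 0 < N := by omega
  set T : ℕ → ℝ := fun m =>
    |∑ π : Finpartition (Finset.univ : Finset (Fin m)),
      v m π * ((1 - resampS N m) ^ (k + 1)).mulVec (f m) π| with hTdef
  set A : ℕ → ℝ := fun m => α m * β m with hAdef
  have hA0 : ∀ m, 0 ≤ A m := fun m => mul_nonneg (hα0 m) (hβ0 m)
  -- per-term bounds
  have hbig : ∀ m, T m ≤ 2 ^ (k+1) * A m := fun m =>
    ResampAux.term_bound N m (by norm_num) (ResampAux.col_le_two N m hN0) (k+1)
      (v m) (f m) (hα0 m) (hv m) (hf m)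
  have hsmall : ∀ m, m < M → T m ≤ (1/2 : ℝ) ^ (k+1) * A m := by
    intro m hmM
    have hmr : (m:ℝ) < Real.sqrt ((N:ℝ)/8) := by
      rw [hM] at hmM
      exact_mod_cast Nat.lt_ceil.1 hmM
    have hN8 : (0:ℝ) ≤ (N:ℝ)/8 := by positivity
    have hmm : (m:ℝ) * (m:ℝ) < (N:ℝ)/8 := by
      have := mul_self_lt_mul_self (Nat.cast_nonneg m) hmr
      rwa [Real.mul_self_sqrt hN8] at this
    exact ResampAux.term_bound N m (by norm_num) (ResampAux.col_le_half N m hN0 hmm) (k+1)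
      (v m) (f m) (hα0 m) (hv m) (hf m)
  set B : ℕ → ℝ := fun m => if m < M then (1/2 : ℝ) ^ (k+1) * A m else 2 ^ (k+1) * A m
    with hBdef
  have hTB : ∀ m, T m ≤ B m := by
    intro m
    by_cases h : m < M
    · simpa [hBdef, h] using hsmall m h
    · simpa [hBdef, h] using hbig m
  have hT0 : ∀ m, 0 ≤ T m := fun m => abs_nonneg _
  have hBle : ∀ m, B m ≤ 2 ^ (k+1) * A m := by
    intro m
    by_cases h : m < M <;> simp only [hBdef, h, if_true, if_false]
    · refine mul_le_mul_of_nonneg_right ?_ (hA0 m)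
      refine pow_le_pow_left₀ (by norm_num) (by norm_num) _
    · exact le_rfl
  have hB0 : ∀ m, 0 ≤ B m := by
    intro m
    by_cases h : m < M <;> simp only [hBdef, h, if_true, if_false]
    · exact mul_nonneg (by positivity) (hA0 m)
    · exact mul_nonneg (by positivity) (hA0 m)
  have hg : Summable (fun m => 2 ^ (k+1) * A m) := hsum.mul_left _
  have hBsum : Summable B := Summable.of_nonneg_of_le hB0 hBle hg
  have hTsum : Summable T := Summable.of_nonneg_of_le hT0 hTB hBsum
  have step1 : ∑' m, T m ≤ ∑' m, B m := hTsum.tsum_le_tsum hTB hBsum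
  -- evaluate tsum of B
  have hsplit : ∑ i ∈ Finset.range M, B i + ∑' i, B (i + M) = ∑' m, B m :=
    hBsum.sum_add_tsum_nat_add M
  have hBsmall : ∑ i ∈ Finset.range M, B i
      = (1/2 : ℝ) ^ (k+1) * ∑ i ∈ Finset.range M, A i := by
    rw [Finset.mul_sum]
    refine Finset.sum_congr rfl fun i hi => ?_
    rw [hBdef]
    simp [Finset.mem_range.1 hi]
  have hBtail : ∑' i, B (i + M) = 2 ^ (k+1) * ∑' i, A (i + M) := by
    rw [← tsum_mul_left]
    refine tsum_congr fun i => ?_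
    have : ¬ (i + M < M) := by omega
    simp [hBdef, this]
  have hγ0A : γ 0 = ∑' j, A j := by
    rw [hγ 0]
    exact tsum_congr fun j => by simp [hAdef]
  have hγMA : ∑' i, A (i + M) = γ M := by
    rw [hγ M]
    exact tsum_congr fun j => by simp [hAdef, add_comm]
  have hsumA : Summable A := hsum
  have hApart : ∑ i ∈ Finset.range M, A i ≤ γ 0 := by
    rw [hγ0A]
    exact hsumA.sum_le_tsum _ (fun i _ => hA0 i)
  have hγ0pos : 0 < γ 0 := lt_of_lt_of_le hγM hγ0
  have step2 : ∑' m, B m ≤ (1/2 : ℝ) ^ (k+1) * γ 0 + 2 ^ (k+1) * γ M := by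
    rw [← hsplit, hBsmall, hBtail, hγMA]
    have h12 : (0:ℝ) ≤ (1/2 : ℝ) ^ (k+1) := by positivity
    have := mul_le_mul_of_nonneg_left hApart h12
    linarith
  -- numeric estimates
  set t : ℝ := Real.logb 2 (γ 0) - Real.logb 2 (γ M) with htdef
  have hdiv : 0 < γ 0 / γ M := div_pos hγ0pos hγM
  have ht : t = Real.logb 2 (γ 0 / γ M) := (Real.logb_div hγ0pos.ne' hγM.ne').symm
  have hdiv1 : (1:ℝ) ≤ γ 0 / γ M := (one_le_div hγM).2 hγ0
  have ht0 : 0 ≤ t := ht ▸ Real.logb_nonneg (by norm_num) hdiv1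
  have h2t : (2:ℝ) ^ t = γ 0 / γ M := by
    rw [ht]
    exact Real.rpow_logb (by norm_num) (by norm_num) hdiv
  have hkle : (k:ℝ) ≤ t/2 := by
    rw [hk]
    exact Nat.floor_le (by linarith)
  have hkge : t/2 ≤ (k:ℝ) + 1 := by
    rw [hk]
    exact le_of_lt (Nat.lt_floor_add_one _)
  have hhalf : (2:ℝ) ^ (t/2) = Real.sqrt (γ 0 / γ M) := by
    rw [Real.sqrt_eq_rpow, ← h2t, ← Real.rpow_mul (by norm_num : (0:ℝ) ≤ 2)]
    congr 1
    ring
  have hpow2 : ((2:ℝ) ^ (k+1) : ℝ) = (2:ℝ) ^ ((k:ℝ)+1 : ℝ) := by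
    rw [← Real.rpow_natCast 2 (k+1)]
    push_cast
    ring_nf
  have hsq : Real.sqrt (γ 0 / γ M) * γ M = Real.sqrt (γ 0 * γ M) := by
    have hgm : γ 0 * γ M = (γ 0 / γ M) * γ M ^ 2 := by field_simp
    rw [hgm, Real.sqrt_mul hdiv.le, Real.sqrt_sq hγM.le]
  have upper1 : (2:ℝ) ^ (k+1) * γ M ≤ 2 * Real.sqrt (γ 0 * γ M) := by
    have h1 : (2:ℝ) ^ ((k:ℝ)+1 : ℝ) ≤ (2:ℝ) ^ (t/2 + 1 : ℝ) :=
      Real.rpow_le_rpow_of_exponent_le one_le_two (by linarith)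
    have h2 : (2:ℝ) ^ (t/2 + 1 : ℝ) = 2 * (2:ℝ) ^ (t/2) := by
      rw [Real.rpow_add two_pos, Real.rpow_one]
      ring
    have h3 : (2:ℝ) ^ (k+1) ≤ 2 * Real.sqrt (γ 0 / γ M) := by
      rw [hpow2, ← hhalf]
      linarith
    calc (2:ℝ) ^ (k+1) * γ M ≤ (2 * Real.sqrt (γ 0 / γ M)) * γ M :=
          mul_le_mul_of_nonneg_right h3 hγM.le
      _ = 2 * Real.sqrt (γ 0 * γ M) := by rw [mul_assoc, hsq]
  have hsq2 : Real.sqrt (γ M / γ 0) * γ 0 = Real.sqrt (γ 0 * γ M) := by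
    have hgm : γ 0 * γ M = (γ M / γ 0) * γ 0 ^ 2 := by field_simp
    rw [hgm, Real.sqrt_mul (by positivity), Real.sqrt_sq hγ0pos.le]
  have upper2 : (1/2 : ℝ) ^ (k+1) * γ 0 ≤ Real.sqrt (γ 0 * γ M) := by
    have hp : (0:ℝ) < (2:ℝ) ^ (t/2 : ℝ) := Real.rpow_pos_of_pos two_pos _
    have h1 : (2:ℝ) ^ (t/2 : ℝ) ≤ (2:ℝ) ^ ((k:ℝ)+1 : ℝ) :=
      Real.rpow_le_rpow_of_exponent_le one_le_two hkge
    have hinv : ((1:ℝ)/2) ^ (k+1) ≤ ((2:ℝ) ^ (t/2 : ℝ))⁻¹ := by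
      rw [one_div, inv_pow]
      refine inv_anti₀ hp ?_
      rw [← hpow2] at h1
      exact h1
    have hinv2 : ((2:ℝ) ^ (t/2 : ℝ))⁻¹ = Real.sqrt (γ M / γ 0) := by
      rw [hhalf, ← Real.sqrt_inv]
      congr 1
      field_simp
    calc (1/2 : ℝ) ^ (k+1) * γ 0 ≤ Real.sqrt (γ M / γ 0) * γ 0 := by
          rw [← hinv2]
          exact mul_le_mul_of_nonneg_right hinv hγ0pos.le
      _ = Real.sqrt (γ 0 * γ M) := hsq2
  have hsqrt0 : 0 ≤ Real.sqrt (γ 0 * γ M) := Real.sqrt_nonneg _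
  calc ∑' m, T m ≤ ∑' m, B m := step1
    _ ≤ (1/2 : ℝ) ^ (k+1) * γ 0 + 2 ^ (k+1) * γ M := step2
    _ ≤ Real.sqrt (γ 0 * γ M) + 2 * Real.sqrt (γ 0 * γ M) := add_le_add upper2 upper1
    _ ≤ 4 * Real.sqrt (γ 0 * γ M) := by linarith
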